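/- arXiv:1803.03034 — 5 statements merged into one kernel-verified Lean document; each statement's English description precedes it below -/
import Mathlib

section
/- Let V be a real inner product space, W ⊆ V a subspace admitting an orthogonal projection onto it, p, q positive integers, and J : V → V a symmetric linear map with J² = pJ + qI. Then for every U ∈ W⊥: T(tU) + t(nU) = p·tU and N(tU) + n²U = p·nU + qU. -/
open scoped RealInnerProductSpace

/-- The tangential part of `J X` with respect to the subspace `W`:
`T X := P_W (J X)` (also used for `t U := P_W (J U)` when `U ∈ Wᗮ`). -/
noncomputable def tang {V : Type*} [NormedAddCommGroup V] [InnerProductSpace ℝ V]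
    (W : Submodule ℝ V) [Submodule.HasOrthogonalProjection W] (J : V →ₗ[ℝ] V) (X : V) : V :=
  (Submodule.orthogonalProjectionOnto W (J X) : V)

/-- The normal part of `J X` with respect to the subspace `W`:
`N X := J X − T X` (also used for `n U := J U − t U` when `U ∈ Wᗮ`). -/
noncomputable def norm' {V : Type*} [NormedAddCommGroup V] [InnerProductSpace ℝ V]
    (W : Submodule ℝ V) [Submodule.HasOrthogonalProjection W] (J : V →ₗ[ℝ] V) (X : V) : V :=
  J X - tang W J X


/-- For a symmetric metallic structure `J` (`J² = pJ + qI`) and a subspace `W`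
with an orthogonal projection, for every `U ∈ Wᗮ`:
`T(tU) + t(nU) = p·tU` and `N(tU) + n²U = p·nU + qU`. -/
theorem induced_structure_identities_normal {V : Type*} [NormedAddCommGroup V]
    [InnerProductSpace ℝ V]
    (W : Submodule ℝ V) [Submodule.HasOrthogonalProjection W]
    (p q : ℕ) (hp : 0 < p) (hq : 0 < q)
    (J : V →ₗ[ℝ] V)
    (hJsym : ∀ x y : V, ⟪J x, y⟫ = ⟪x, J y⟫)
    (hJ2 : ∀ v : V, J (J v) = (p : ℝ) • J v + (q : ℝ) • v) :
    ∀ U ∈ Wᗮ,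
      tang W J (tang W J U) + tang W J (norm' W J U) = (p : ℝ) • tang W J U ∧
      norm' W J (tang W J U) + norm' W J (norm' W J U) = (p : ℝ) • norm' W J U + (q : ℝ) • U := by
  intro U hU
  have hPU : (Submodule.orthogonalProjectionOnto W U : V) = 0 := by
    rw [Submodule.orthogonalProjectionOnto_apply_of_mem_orthogonal hU]; rfl
  have key : tang W J (tang W J U) + tang W J (norm' W J U) = (p : ℝ) • tang W J U := by
    simp only [tang, norm', map_sub, map_add, map_smul, hJ2, Submodule.coe_sub,
      Submodule.coe_add, Submodule.coe_smul, hPU, smul_zero, add_zero]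
    abel
  refine ⟨key, ?_⟩
  have : norm' W J (tang W J U) + norm' W J (norm' W J U)
      = J (J U) - ((p : ℝ) • tang W J U) := by
    simp only [norm', tang] at key ⊢
    rw [← key]
    simp only [map_sub]
    abel
  rw [this, hJ2]
  simp only [norm', tang]
  module
end

section
/- Let V be a real inner product space, W ⊆ V a subspace admitting an orthogonal projection onto it, p, q positive integers, and J : V → V a symmetric linear map with J² = pJ + qI. If W is slant with slant angle θ with respect to J, then T²X = cos²θ·(pTX + qX) for every X ∈ W. -/
open scoped RealInnerProductSpace

/-- If `W` is slant with slant angle `θ` with respect to a symmetric metallic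
structure `J` (`J² = pJ + qI`), then `T²X = cos²θ·(pTX + qX)` for every `X ∈ W`. -/
theorem slant_T_squared {V : Type*} [NormedAddCommGroup V] [InnerProductSpace ℝ V]
    (W : Submodule ℝ V) [Submodule.HasOrthogonalProjection W]
    (p q : ℕ) (hp : 0 < p) (hq : 0 < q)
    (J : V →ₗ[ℝ] V)
    (hJsym : ∀ x y : V, ⟪J x, y⟫ = ⟪x, J y⟫)
    (hJ2 : ∀ v : V, J (J v) = (p : ℝ) • J v + (q : ℝ) • v)
    (θ : ℝ) (hθ : θ ∈ Set.Icc 0 (Real.pi / 2))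
    (hslant : ∀ X ∈ W, ‖tang W J X‖ = Real.cos θ * ‖J X‖) :
    ∀ X ∈ W,
      tang W J (tang W J X) = Real.cos θ ^ 2 • ((p : ℝ) • tang W J X + (q : ℝ) • X) := by
  have hTmem : ∀ Z : V, tang W J Z ∈ W := fun Z => (Submodule.orthogonalProjectionOnto W (J Z)).2
  -- tang is the projection, so it agrees with J against vectors of W
  have hA : ∀ (Z Y : V), Y ∈ W → ⟪tang W J Z, Y⟫ = ⟪J Z, Y⟫ := by
    intro Z Y hY
    have h0 := W.starProjection_inner_eq_zero (J Z) Y hY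
    rw [inner_sub_left] at h0
    have : ⟪J Z, Y⟫ - ⟪tang W J Z, Y⟫ = 0 := h0
    linarith
  have hadd : ∀ X Y : V, tang W J (X + Y) = tang W J X + tang W J Y := by
    intro X Y
    simp [tang, map_add]
  -- squared slant condition
  have hsq : ∀ X ∈ W, ‖tang W J X‖ ^ 2 = Real.cos θ ^ 2 * ‖J X‖ ^ 2 := by
    intro X hX
    rw [hslant X hX]; ring
  -- polarization: ⟪TX, TY⟫ = cos²θ ⟪JX, JY⟫ for X, Y ∈ W
  have hB : ∀ X ∈ W, ∀ Y ∈ W, ⟪tang W J X, tang W J Y⟫ =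
      Real.cos θ ^ 2 * ⟪J X, J Y⟫ := by
    intro X hX Y hY
    have h1 := hsq X hX
    have h2 := hsq Y hY
    have h3 := hsq (X + Y) (W.add_mem hX hY)
    rw [hadd, map_add] at h3
    rw [norm_add_sq_real, norm_add_sq_real] at h3
    nlinarith [h1, h2, h3]
  intro X hX
  set c := Real.cos θ ^ 2 with hc
  set z := tang W J (tang W J X) - c • ((p : ℝ) • tang W J X + (q : ℝ) • X) with hz
  have hzW : z ∈ W := by
    apply W.sub_mem (hTmem _)
    exact W.smul_mem _ (W.add_mem (W.smul_mem _ (hTmem _)) (W.smul_mem _ hX))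
  have hkey : ∀ Y ∈ W, ⟪z, Y⟫ = 0 := by
    intro Y hY
    have e1 : ⟪tang W J (tang W J X), Y⟫ = ⟪tang W J X, tang W J Y⟫ := by
      rw [hA _ _ hY, hJsym, real_inner_comm, ← hA Y _ (hTmem X), real_inner_comm]
    have e2 : ⟪tang W J X, tang W J Y⟫ = c * ⟪J X, J Y⟫ := hB X hX Y hY
    have e3 : ⟪J X, J Y⟫ = (p : ℝ) * ⟪J X, Y⟫ + (q : ℝ) * ⟪X, Y⟫ := by
      rw [real_inner_comm, hJsym, hJ2]
      rw [inner_add_right, real_inner_smul_right, real_inner_smul_right]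
      rw [real_inner_comm Y (J X), real_inner_comm Y X]
    have e4 : ⟪tang W J X, Y⟫ = ⟪J X, Y⟫ := hA _ _ hY
    rw [hz, inner_sub_left, e1, e2, e3]
    rw [real_inner_smul_left, inner_add_left, real_inner_smul_left,
      real_inner_smul_left, e4]
    ring
  have hzz : ⟪z, z⟫ = 0 := hkey z hzW
  have : z = 0 := by
    rwa [inner_self_eq_zero] at hzz
  have := sub_eq_zero.mp this
  exact this
end

section
/- Let V be a real inner product space, W ⊆ V a subspace admitting an orthogonal projection onto it, p, q positive integers, and J : V → V a symmetric linear map with J² = pJ + qI. If W is slant with slant angle θ with respect to J, then t(NX) = sin²θ·(pTX + qX) for every X ∈ W. -/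
open scoped RealInnerProductSpace

/-- If `W` is slant with slant angle `θ` with respect to a symmetric metallic
structure `J` (`J² = pJ + qI`), then `t(NX) = sin²θ·(pTX + qX)` for every `X ∈ W`. -/
theorem slant_tN_identity {V : Type*} [NormedAddCommGroup V] [InnerProductSpace ℝ V]
    (W : Submodule ℝ V) [Submodule.HasOrthogonalProjection W]
    (p q : ℕ) (hp : 0 < p) (hq : 0 < q)
    (J : V →ₗ[ℝ] V)
    (hJsym : ∀ x y : V, ⟪J x, y⟫ = ⟪x, J y⟫)
    (hJ2 : ∀ v : V, J (J v) = (p : ℝ) • J v + (q : ℝ) • v)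
    (θ : ℝ) (hθ : θ ∈ Set.Icc 0 (Real.pi / 2))
    (hslant : ∀ X ∈ W, ‖tang W J X‖ = Real.cos θ * ‖J X‖) :
    ∀ X ∈ W,
      tang W J (norm' W J X) = Real.sin θ ^ 2 • ((p : ℝ) • tang W J X + (q : ℝ) • X) := by
  intro X hX
  -- abbreviations
  set c := Real.cos θ with hc
  have hmem : ∀ v : V, tang W J v ∈ W := fun v => (Submodule.orthogonalProjectionOnto W (J v)).2
  have hproj : ∀ v : V, ∀ y ∈ W, ⟪tang W J v, y⟫ = ⟪J v, y⟫ := by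
    intro v y hy
    have h0 := Submodule.starProjection_inner_eq_zero (K := W) (J v) y hy
    have : ⟪J v - tang W J v, y⟫ = 0 := h0
    rw [inner_sub_left] at this
    linarith
  have htlin : ∀ a b : V, tang W J (a + b) = tang W J a + tang W J b := by
    intro a b; simp [tang, map_add]
  -- norms squared
  have hsq : ∀ Z ∈ W, ⟪tang W J Z, tang W J Z⟫ = c ^ 2 * ⟪J Z, J Z⟫ := by
    intro Z hZ
    have h1 : ⟪tang W J Z, tang W J Z⟫ = (c * ‖J Z‖) ^ 2 := by
      rw [real_inner_self_eq_norm_sq, hslant Z hZ]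
    rw [h1, mul_pow, ← real_inner_self_eq_norm_sq]
  -- bilinear identity
  have hbil : ∀ X ∈ W, ∀ Y ∈ W, ⟪tang W J X, tang W J Y⟫ = c ^ 2 * ⟪J X, J Y⟫ := by
    intro X hX Y hY
    have h1 := hsq X hX
    have h2 := hsq Y hY
    have h3 := hsq (X + Y) (W.add_mem hX hY)
    rw [htlin, map_add, inner_add_add_self, inner_add_add_self] at h3
    nlinarith [h1, h2, h3, real_inner_comm (tang W J X) (tang W J Y),
      real_inner_comm (J X) (J Y)]
  -- T² identity
  have hT2 : tang W J (tang W J X) = c ^ 2 • ((p : ℝ) • tang W J X + (q : ℝ) • X) := by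
    set Z := tang W J (tang W J X) - c ^ 2 • ((p : ℝ) • tang W J X + (q : ℝ) • X) with hZ
    have hZmem : Z ∈ W := by
      apply W.sub_mem (hmem _)
      exact W.smul_mem _ (W.add_mem (W.smul_mem _ (hmem _)) (W.smul_mem _ hX))
    have hinner : ∀ Y ∈ W, ⟪Z, Y⟫ = 0 := by
      intro Y hY
      have e1 : ⟪tang W J (tang W J X), Y⟫ = ⟪tang W J X, tang W J Y⟫ := by
        rw [hproj _ Y hY, hJsym]
        have h0 : ⟪J Y - tang W J Y, tang W J X⟫ = 0 :=
          Submodule.starProjection_inner_eq_zero (K := W) (J Y) (tang W J X) (hmem X)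
        rw [inner_sub_left] at h0
        have c1 := real_inner_comm (J Y) (tang W J X)
        have c2 := real_inner_comm (tang W J Y) (tang W J X)
        linarith
      have e2 : ⟪J X, J Y⟫ = (p : ℝ) * ⟪tang W J X, Y⟫ + (q : ℝ) * ⟪X, Y⟫ := by
        rw [← hJsym (J X) Y, hJ2, inner_add_left, real_inner_smul_left,
          real_inner_smul_left, ← hproj X Y hY]
      rw [hZ, inner_sub_left, real_inner_smul_left, inner_add_left,
        real_inner_smul_left, real_inner_smul_left, e1, hbil X hX Y hY, e2]
      ring
    have hZ0 : Z = 0 := by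
      have := hinner Z hZmem
      rwa [inner_self_eq_zero] at this
    have := sub_eq_zero.mp hZ0
    exact this
  -- final
  have hsin : Real.sin θ ^ 2 = 1 - c ^ 2 := by
    have := Real.sin_sq_add_cos_sq θ; linarith
  have hXself : (Submodule.orthogonalProjectionOnto W X : V) = X := (Submodule.starProjection_eq_self_iff (K := W)).mpr hX
  have hNX : tang W J (norm' W J X) =
      (p : ℝ) • tang W J X + (q : ℝ) • X - tang W J (tang W J X) := by
    show (Submodule.orthogonalProjectionOnto W (J (J X - tang W J X)) : V) = _
    rw [map_sub J, hJ2, map_sub, map_add, map_smul, map_smul]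
    simp only [Submodule.coe_sub, Submodule.coe_add, Submodule.coe_smul, hXself]
    rfl
  rw [hNX, hT2, hsin]
  module
end

section
/- Let V be a real inner product space, W ⊆ V a subspace admitting an orthogonal projection onto it, p, q positive integers, J : V → V a symmetric linear map with J² = pJ + qI, and D ⊆ W a subspace admitting an orthogonal projection P_D onto it. Then D is a slant distribution, i.e. there is θ_D ∈ [0, π/2] with ‖P_D(TX)‖ = cos θ_D·‖JX‖ for every X ∈ D, if and only if there exists a constant λ ∈ [0, 1] such that (P_D ∘ T)²X = λ(p·P_D(TX) + qX) for every X ∈ D; moreover, in that case λ = cos²θ_D. -/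
open scoped RealInnerProductSpace

/-- The orthogonal projection onto the subspace `D`, as a map `V → V`. -/
noncomputable def projD {V : Type*} [NormedAddCommGroup V] [InnerProductSpace ℝ V]
    (D : Submodule ℝ V) [Submodule.HasOrthogonalProjection D] (X : V) : V :=
  (Submodule.orthogonalProjectionOnto D X : V)

lemma inner_projD_left {V : Type*} [NormedAddCommGroup V] [InnerProductSpace ℝ V]
    (D : Submodule ℝ V) [Submodule.HasOrthogonalProjection D] (x y : V) (hy : y ∈ D) :
    ⟪projD D x, y⟫ = ⟪x, y⟫ := by
  have h := Submodule.sub_starProjection_mem_orthogonal (K := D) x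
  have h0 : ⟪x - projD D x, y⟫ = 0 := (Submodule.mem_orthogonal' D _).1 h y hy
  rw [inner_sub_left] at h0
  linarith

lemma projD_mem {V : Type*} [NormedAddCommGroup V] [InnerProductSpace ℝ V]
    (D : Submodule ℝ V) [Submodule.HasOrthogonalProjection D] (x : V) : projD D x ∈ D :=
  (Submodule.orthogonalProjectionOnto D x).2

/-- A subspace `D ⊆ W` is a slant distribution for a symmetric metallic
structure `J` (i.e. there is `θ_D ∈ [0, π/2]` with `‖P_D(TX)‖ = cos θ_D·‖JX‖` on `D`)
iff there is `λ ∈ [0, 1]` with `(P_D ∘ T)²X = λ(p·P_D(TX) + qX)` on `D`;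
moreover in that case (`D` containing a nonzero vector) `λ = cos²θ_D`. -/
theorem slant_distribution_characterization {V : Type*} [NormedAddCommGroup V]
    [InnerProductSpace ℝ V]
    (W : Submodule ℝ V) [Submodule.HasOrthogonalProjection W]
    (p q : ℕ) (hp : 0 < p) (hq : 0 < q)
    (J : V →ₗ[ℝ] V)
    (hJsym : ∀ x y : V, ⟪J x, y⟫ = ⟪x, J y⟫)
    (hJ2 : ∀ v : V, J (J v) = (p : ℝ) • J v + (q : ℝ) • v)
    (D : Submodule ℝ V) [Submodule.HasOrthogonalProjection D]
    (hDW : D ≤ W) :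
    ((∃ θ ∈ Set.Icc 0 (Real.pi / 2),
        ∀ X ∈ D, ‖projD D (tang W J X)‖ = Real.cos θ * ‖J X‖) ↔
      (∃ l ∈ Set.Icc (0 : ℝ) 1,
        ∀ X ∈ D, projD D (tang W J (projD D (tang W J X))) =
          l • ((p : ℝ) • projD D (tang W J X) + (q : ℝ) • X))) ∧
    (D ≠ ⊥ →
      ∀ θ ∈ Set.Icc 0 (Real.pi / 2), ∀ l ∈ Set.Icc (0 : ℝ) 1,
      (∀ X ∈ D, ‖projD D (tang W J X)‖ = Real.cos θ * ‖J X‖) →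
      (∀ X ∈ D, projD D (tang W J (projD D (tang W J X))) =
        l • ((p : ℝ) • projD D (tang W J X) + (q : ℝ) • X)) →
      l = Real.cos θ ^ 2) := by
  have hq' : (0:ℝ) < q := by exact_mod_cast hq
  set A : V → V := fun X => projD D (tang W J X) with hA_def
  have hAmem : ∀ x, A x ∈ D := fun x => projD_mem D _
  have htang : ∀ x, tang W J x = projD W (J x) := fun x => rfl
  have hA : ∀ x y, y ∈ D → ⟪A x, y⟫ = ⟪J x, y⟫ := by
    intro x y hy
    rw [hA_def]
    simp only
    rw [inner_projD_left D _ _ hy, htang, inner_projD_left W _ _ (hDW hy)]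
  -- symmetry of A on D
  have hsymA : ∀ x ∈ D, ∀ y ∈ D, ⟪A x, y⟫ = ⟪A y, x⟫ := by
    intro x hx y hy
    rw [hA x y hy, hA y x hx, hJsym, real_inner_comm]
  -- ⟪A (A x), y⟫ = ⟪A x, A y⟫
  have hAA : ∀ x, ∀ y ∈ D, ⟪A (A x), y⟫ = ⟪A x, A y⟫ := by
    intro x y hy
    rw [hA (A x) y hy, hJsym, real_inner_comm, ← hA y (A x) (hAmem x), real_inner_comm]
  -- ‖A x‖² = ⟪A (A x), x⟫ for x ∈ D
  have hAn : ∀ x ∈ D, ‖A x‖ ^ 2 = ⟪A (A x), x⟫ := by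
    intro x hx
    rw [hAA x x hx, real_inner_self_eq_norm_sq]
  -- ‖J x‖² = p⟪Jx,x⟫ + q‖x‖²
  have hJn : ∀ x, ‖J x‖ ^ 2 = (p:ℝ) * ⟪J x, x⟫ + (q:ℝ) * ‖x‖ ^ 2 := by
    intro x
    have h := hJsym (J x) x
    rw [hJ2, inner_add_left, real_inner_smul_left, real_inner_smul_left,
      real_inner_self_eq_norm_sq] at h
    rw [← real_inner_self_eq_norm_sq (J x)]
    linarith
  -- from the operator identity, ‖A X‖² = l ‖J X‖²
  have hkey : ∀ (l : ℝ),
      (∀ X ∈ D, A (A X) = l • ((p:ℝ) • A X + (q:ℝ) • X)) →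
      ∀ X ∈ D, ‖A X‖ ^ 2 = l * ‖J X‖ ^ 2 := by
    intro l hop X hX
    rw [hAn X hX, hop X hX, real_inner_smul_left, inner_add_left,
      real_inner_smul_left, real_inner_smul_left, hA X X hX,
      real_inner_self_eq_norm_sq, hJn]
  constructor
  · constructor
    · -- slant → operator identity
      rintro ⟨θ, hθ, hs⟩
      refine ⟨Real.cos θ ^ 2, ⟨sq_nonneg _, Real.cos_sq_le_one θ⟩, ?_⟩
      set l := Real.cos θ ^ 2 with hl_def
      set B : V → V := fun X => A (A X) - l • ((p:ℝ) • A X + (q:ℝ) • X) with hB_def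
      have hBmem : ∀ x ∈ D, B x ∈ D := by
        intro x hx
        exact D.sub_mem (hAmem _) (D.smul_mem _ (D.add_mem (D.smul_mem _ (hAmem x))
          (D.smul_mem _ hx)))
      have hAadd : ∀ x y, A (x + y) = A x + A y := by
        intro x y
        simp [hA_def, tang, projD, map_add]
      have hBadd : ∀ x y, B (x + y) = B x + B y := by
        intro x y
        simp only [hB_def, hAadd, smul_add]
        abel
      have hBdiag : ∀ x ∈ D, ⟪B x, x⟫ = 0 := by
        intro x hx
        have h1 : ‖A x‖ ^ 2 = l * ‖J x‖ ^ 2 := by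
          rw [hs x hx, hl_def]; ring
        rw [hB_def]
        simp only
        rw [inner_sub_left, real_inner_smul_left, inner_add_left,
          real_inner_smul_left, real_inner_smul_left, hA x x hx,
          real_inner_self_eq_norm_sq, ← hAn x hx]
        rw [hJn] at h1
        linarith
      have hBsym : ∀ x ∈ D, ∀ y ∈ D, ⟪B x, y⟫ = ⟪B y, x⟫ := by
        intro x hx y hy
        rw [hB_def]
        simp only
        rw [inner_sub_left, inner_sub_left, real_inner_smul_left, real_inner_smul_left,
          inner_add_left, inner_add_left, real_inner_smul_left, real_inner_smul_left,
          real_inner_smul_left, real_inner_smul_left,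
          hAA x y hy, hAA y x hx, real_inner_comm (A x) (A y),
          hsymA x hx y hy, real_inner_comm x y]
      have hBzero : ∀ x ∈ D, ∀ y ∈ D, ⟪B x, y⟫ = 0 := by
        intro x hx y hy
        have h := hBdiag (x + y) (D.add_mem hx hy)
        rw [hBadd, inner_add_left, inner_add_right, inner_add_right,
          hBdiag x hx, hBdiag y hy, hBsym y hy x hx] at h
        linarith
      intro X hX
      have h0 : B X = 0 := by
        have := hBzero X hX (B X) (hBmem X hX)
        rwa [real_inner_self_eq_norm_sq, pow_eq_zero_iff (by norm_num),
          norm_eq_zero] at this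
      have := sub_eq_zero.mp (hB_def ▸ h0)
      exact this
    · -- operator identity → slant
      rintro ⟨l, ⟨hl0, hl1⟩, hop⟩
      refine ⟨Real.arccos (Real.sqrt l), ⟨Real.arccos_nonneg _, ?_⟩, ?_⟩
      · rw [Real.arccos_eq_pi_div_two_sub_arcsin]
        have := Real.arcsin_nonneg.2 (Real.sqrt_nonneg l)
        linarith
      · intro X hX
        have hcos : Real.cos (Real.arccos (Real.sqrt l)) = Real.sqrt l :=
          Real.cos_arccos (le_trans (by norm_num) (Real.sqrt_nonneg l))
            (Real.sqrt_le_one.2 hl1)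
        rw [hcos]
        have h1 : ‖A X‖ ^ 2 = l * ‖J X‖ ^ 2 := hkey l hop X hX
        have : ‖A X‖ = Real.sqrt (l * ‖J X‖ ^ 2) := by
          rw [← h1, Real.sqrt_sq (norm_nonneg _)]
        rw [this, Real.sqrt_mul hl0, Real.sqrt_sq (norm_nonneg _)]
  · -- uniqueness of l
    intro hDbot θ hθ l hl hs hop
    obtain ⟨X, hX, hX0⟩ := Submodule.exists_mem_ne_zero_of_ne_bot hDbot
    have hJX : J X ≠ 0 := by
      intro h
      have h2 := hJ2 X
      rw [h, map_zero, smul_zero, zero_add] at h2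
      exact hX0 ((smul_eq_zero_iff_right (ne_of_gt hq')).1 h2.symm)
    have hJXn : (0:ℝ) < ‖J X‖ ^ 2 := pow_pos (norm_pos_iff.2 hJX) 2
    have h1 : ‖A X‖ ^ 2 = l * ‖J X‖ ^ 2 := hkey l hop X hX
    have h2 : ‖A X‖ ^ 2 = Real.cos θ ^ 2 * ‖J X‖ ^ 2 := by
      rw [hs X hX]; ring
    have := h1.symm.trans h2
    exact mul_right_cancel₀ (ne_of_gt hJXn) this
end

section
/- Let V be a real inner product space, p, q positive integers, J : V → V a symmetric linear map with J² = pJ + qI, and W = D₁ ⊕ D₂ a semi-slant subspace: W admits an orthogonal projection onto it, D₁ and D₂ are mutually orthogonal subspaces with orthogonal projections P₁, P₂, J(D₁) = D₁, and D₂ is slant with slant angle θ (i.e. ‖TX‖ = cos θ·‖JX‖ for every X ∈ D₂). Then for all X, Y ∈ W: ⟨T(P₂X), T(P₂Y)⟩ = cos²θ·(p⟨T(P₂X), P₂Y⟩ + q⟨P₂X, P₂Y⟩) and ⟨NX, NY⟩ = sin²θ·(p⟨T(P₂X), P₂Y⟩ + q⟨P₂X, P₂Y⟩). -/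
open scoped RealInnerProductSpace

section Aux

variable {V : Type*} [NormedAddCommGroup V] [InnerProductSpace ℝ V]

lemma tang_mem (W : Submodule ℝ V) [Submodule.HasOrthogonalProjection W] (J : V →ₗ[ℝ] V) (X : V) :
    tang W J X ∈ W := (Submodule.orthogonalProjectionOnto W (J X)).2

lemma tang_add (W : Submodule ℝ V) [Submodule.HasOrthogonalProjection W] (J : V →ₗ[ℝ] V) (X Y : V) :
    tang W J (X + Y) = tang W J X + tang W J Y := by
  simp [tang, map_add]

lemma norm'_inner_right (W : Submodule ℝ V) [Submodule.HasOrthogonalProjection W] (J : V →ₗ[ℝ] V)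
    (X : V) {y : V} (hy : y ∈ W) : ⟪norm' W J X, y⟫ = 0 := by
  have h := Submodule.sub_starProjection_mem_orthogonal (K := W) (J X)
  exact (Submodule.mem_orthogonal' W _).mp h y hy

end Aux

/-- If `W = D₁ ⊕ D₂` is a semi-slant subspace for a symmetric metallic
structure `J` (`D₁` invariant, `D₂` slant with angle `θ ≠ 0`), then for all `X, Y ∈ W`:
`⟨T(P₂X), T(P₂Y)⟩ = cos²θ·(p⟨T(P₂X), P₂Y⟩ + q⟨P₂X, P₂Y⟩)` and
`⟨NX, NY⟩ = sin²θ·(p⟨T(P₂X), P₂Y⟩ + q⟨P₂X, P₂Y⟩)`. -/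
theorem semislant_inner_identities {V : Type*} [NormedAddCommGroup V]
    [InnerProductSpace ℝ V]
    (p q : ℕ) (hp : 0 < p) (hq : 0 < q)
    (J : V →ₗ[ℝ] V)
    (hJsym : ∀ x y : V, ⟪J x, y⟫ = ⟪x, J y⟫)
    (hJ2 : ∀ v : V, J (J v) = (p : ℝ) • J v + (q : ℝ) • v)
    (W D₁ D₂ : Submodule ℝ V) [Submodule.HasOrthogonalProjection W]
    [Submodule.HasOrthogonalProjection D₁] [Submodule.HasOrthogonalProjection D₂]
    (hD₁W : D₁ ≤ W) (hD₂W : D₂ ≤ W)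
    (horth : ∀ x ∈ D₁, ∀ y ∈ D₂, ⟪x, y⟫ = 0)
    (hW : D₁ ⊔ D₂ = W)
    (hinv : D₁.map J = D₁)
    (θ : ℝ) (hθ : θ ∈ Set.Ioc 0 (Real.pi / 2))
    (hslant : ∀ X ∈ D₂, ‖tang W J X‖ = Real.cos θ * ‖J X‖) :
    ∀ X ∈ W, ∀ Y ∈ W,
      ⟪tang W J (projD D₂ X), tang W J (projD D₂ Y)⟫ =
        Real.cos θ ^ 2 * ((p : ℝ) * ⟪tang W J (projD D₂ X), projD D₂ Y⟫ +
          (q : ℝ) * ⟪projD D₂ X, projD D₂ Y⟫) ∧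
      ⟪norm' W J X, norm' W J Y⟫ =
        Real.sin θ ^ 2 * ((p : ℝ) * ⟪tang W J (projD D₂ X), projD D₂ Y⟫ +
          (q : ℝ) * ⟪projD D₂ X, projD D₂ Y⟫) := by
  -- diagonal case of the slant condition, squared
  have hdiag : ∀ Z ∈ D₂, ⟪tang W J Z, tang W J Z⟫ = Real.cos θ ^ 2 * ⟪J Z, J Z⟫ := by
    intro Z hZ
    have h := hslant Z hZ
    have h1 : ⟪tang W J Z, tang W J Z⟫ = ‖tang W J Z‖ ^ 2 := real_inner_self_eq_norm_sq _
    have h2 : ⟪J Z, J Z⟫ = ‖J Z‖ ^ 2 := real_inner_self_eq_norm_sq _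
    rw [h1, h2, h]; ring
  -- polarization
  have hkey : ∀ X ∈ D₂, ∀ Y ∈ D₂,
      ⟪tang W J X, tang W J Y⟫ = Real.cos θ ^ 2 * ⟪J X, J Y⟫ := by
    intro X hX Y hY
    have hXY := hdiag (X + Y) (D₂.add_mem hX hY)
    rw [tang_add, map_add] at hXY
    rw [real_inner_add_add_self, real_inner_add_add_self] at hXY
    have h1 := hdiag X hX
    have h2 := hdiag Y hY
    linarith
  -- ⟪J X, J Y⟫ expansion for X ∈ D₂ (anything) and Y ∈ W
  have hJJ : ∀ X : V, ∀ Y ∈ W, ⟪J X, J Y⟫ =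
      (p : ℝ) * ⟪tang W J X, Y⟫ + (q : ℝ) * ⟪X, Y⟫ := by
    intro X Y hY
    have h1 : ⟪J X, J Y⟫ = ⟪J (J X), Y⟫ := (hJsym (J X) Y).symm
    rw [h1, hJ2, inner_add_left, real_inner_smul_left, real_inner_smul_left]
    have h2 : ⟪J X, Y⟫ = ⟪tang W J X, Y⟫ := by
      have : ⟪norm' W J X, Y⟫ = 0 := norm'_inner_right W J X hY
      rw [norm', inner_sub_left] at this
      linarith
    rw [h2]
  -- ⟪N X, N Y⟫ = ⟪J X, J Y⟫ - ⟪T X, T Y⟫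
  have hNN : ∀ X Y : V, ⟪norm' W J X, norm' W J Y⟫ =
      ⟪J X, J Y⟫ - ⟪tang W J X, tang W J Y⟫ := by
    intro X Y
    have c1 : ⟪norm' W J X, tang W J Y⟫ = 0 :=
      norm'_inner_right W J X (tang_mem W J Y)
    have c2 : ⟪tang W J X, norm' W J Y⟫ = 0 := by
      rw [real_inner_comm]; exact norm'_inner_right W J Y (tang_mem W J X)
    have : ⟪norm' W J X, norm' W J Y⟫
        = ⟪J X - tang W J X, J Y - tang W J Y⟫ := rfl
    rw [this, inner_sub_left, inner_sub_right, inner_sub_right]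
    have c3 : ⟪J X, tang W J Y⟫ = ⟪tang W J X, tang W J Y⟫ := by
      have h := c1
      rw [norm', inner_sub_left] at h; linarith
    have c4 : ⟪tang W J X, J Y⟫ = ⟪tang W J X, tang W J Y⟫ := by
      have h := c2
      rw [norm', inner_sub_right] at h; linarith
    rw [c3, c4]; ring
  intro X hX Y hY
  rw [← hW] at hX hY
  obtain ⟨a, ha, b, hb, rfl⟩ := Submodule.mem_sup.mp hX
  obtain ⟨c, hc, d, hd, rfl⟩ := Submodule.mem_sup.mp hY
  -- projections onto D₂
  have hproj : ∀ u ∈ D₁, ∀ v ∈ D₂, projD D₂ (u + v) = v := by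
    intro u hu v hv
    have hu' : u ∈ D₂ᗮ := by
      rw [Submodule.mem_orthogonal']
      intro y hy; exact horth u hu y hy
    unfold projD
    rw [map_add]
    push_cast
    rw [Submodule.orthogonalProjectionOnto_apply_of_mem_orthogonal hu',
      ← Submodule.starProjection_apply, Submodule.starProjection_eq_self_iff.mpr hv]
    simp
  have hPX : projD D₂ (a + b) = b := hproj a ha b hb
  have hPY : projD D₂ (c + d) = d := hproj c hc d hd
  -- normal part vanishes on D₁
  have hN1 : ∀ u ∈ D₁, norm' W J u = 0 := by
    intro u hu
    have hJu : J u ∈ D₁ := by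
      rw [← hinv]; exact Submodule.mem_map_of_mem hu
    have : tang W J u = J u := Submodule.starProjection_eq_self_iff.mpr (hD₁W hJu)
    simp [norm', this]
  have hNadd : ∀ u v : V, norm' W J (u + v) = norm' W J u + norm' W J v := by
    intro u v; simp only [norm', map_add, tang_add]; abel
  have hNX : norm' W J (a + b) = norm' W J b := by
    rw [hNadd, hN1 a ha, zero_add]
  have hNY : norm' W J (c + d) = norm' W J d := by
    rw [hNadd, hN1 c hc, zero_add]
  rw [hPX, hPY, hNX, hNY]
  have hbW : b ∈ W := hD₂W hb
  have hdW : d ∈ W := hD₂W hd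
  have e1 : ⟪tang W J b, tang W J d⟫ = Real.cos θ ^ 2 * ⟪J b, J d⟫ := hkey b hb d hd
  have e2 : ⟪J b, J d⟫ = (p : ℝ) * ⟪tang W J b, d⟫ + (q : ℝ) * ⟪b, d⟫ := hJJ b d hdW
  constructor
  · rw [e1, e2]
  · rw [hNN, e1, e2]
    have hs : Real.sin θ ^ 2 = 1 - Real.cos θ ^ 2 := by
      have := Real.sin_sq_add_cos_sq θ; linarith
    rw [hs]; ring
end
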